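/- arXiv:2111.00047 — 2 statements merged into one kernel-verified Lean document; each statement's English description precedes it below -/
import Mathlib

section
/- As ε → 0⁺, the minimizers P^ε of the entropy-regularized discrete optimal transport problem converge (along a subsequence, and entirely if the unregularized problem has a unique solution) to a minimizer of the unregularized linear program; moreover any limit point is the maximal-entropy optimal plan among unregularized optima. -/
open Finset Filter Topology

/-- The transportation polytope with uniform marginals `1/N`. -/
def transportPolytope (N : ℕ) : Set (Matrix (Fin N) (Fin N) ℝ) :=
  {P | (∀ i j, 0 ≤ P i j) ∧
    (∀ i, ∑ j, P i j = 1 / (N : ℝ)) ∧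
    (∀ j, ∑ i, P i j = 1 / (N : ℝ))}

/-- Entropy of a nonnegative matrix (with `0 log 0 = 0`, as `Real.log 0 = 0`). -/
noncomputable def matrixEntropy {N : ℕ} (P : Matrix (Fin N) (Fin N) ℝ) : ℝ :=
  -∑ i, ∑ j, P i j * Real.log (P i j)

instance matFC (N : ℕ) : FirstCountableTopology (Matrix (Fin N) (Fin N) ℝ) :=
  inferInstanceAs (FirstCountableTopology (Fin N → Fin N → ℝ))

lemma entryCont {N : ℕ} (i j : Fin N) :
    Continuous fun P : Matrix (Fin N) (Fin N) ℝ => P i j :=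
  (continuous_apply j).comp (continuous_apply i)

lemma costCont {N : ℕ} (C : Matrix (Fin N) (Fin N) ℝ) :
    Continuous fun Q : Matrix (Fin N) (Fin N) ℝ => ∑ i, ∑ j, C i j * Q i j :=
  continuous_finset_sum _ fun i _ => continuous_finset_sum _ fun j _ =>
    continuous_const.mul (entryCont i j)

lemma entCont {N : ℕ} : Continuous (matrixEntropy (N := N)) :=
  (continuous_finset_sum _ fun i _ => continuous_finset_sum _ fun j _ =>
    Real.continuous_mul_log.comp (entryCont i j)).neg

lemma polytope_isClosed (N : ℕ) : IsClosed (transportPolytope N) := by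
  have h1 : IsClosed {P : Matrix (Fin N) (Fin N) ℝ | ∀ i j, 0 ≤ P i j} := by
    simp only [Set.setOf_forall]
    exact isClosed_iInter fun i => isClosed_iInter fun j =>
      isClosed_le continuous_const (entryCont i j)
  have h2 : IsClosed {P : Matrix (Fin N) (Fin N) ℝ | ∀ i, ∑ j, P i j = 1 / (N : ℝ)} := by
    simp only [Set.setOf_forall]
    exact isClosed_iInter fun i =>
      isClosed_eq (continuous_finset_sum _ fun j _ => entryCont i j) continuous_const
  have h3 : IsClosed {P : Matrix (Fin N) (Fin N) ℝ | ∀ j, ∑ i, P i j = 1 / (N : ℝ)} := by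
    simp only [Set.setOf_forall]
    exact isClosed_iInter fun j =>
      isClosed_eq (continuous_finset_sum _ fun i _ => entryCont i j) continuous_const
  have : transportPolytope N =
      {P | ∀ i j, 0 ≤ P i j} ∩ ({P | ∀ i, ∑ j, P i j = 1 / (N : ℝ)} ∩
        {P | ∀ j, ∑ i, P i j = 1 / (N : ℝ)}) := by
    ext P; simp [transportPolytope, and_assoc]
  rw [this]
  exact h1.inter (h2.inter h3)

lemma polytope_isCompact (N : ℕ) : IsCompact (transportPolytope N) := by
  have hK : IsCompact (Set.pi Set.univ fun _ : Fin N =>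
      Set.pi Set.univ fun _ : Fin N => Set.Icc (0:ℝ) (1 / N)) :=
    isCompact_univ_pi fun _ => isCompact_univ_pi fun _ => isCompact_Icc
  refine hK.of_isClosed_subset (polytope_isClosed N) ?_
  rintro P ⟨h0, hr, _⟩
  intro i _ j _
  refine ⟨h0 i j, ?_⟩
  calc P i j ≤ ∑ j', P i j' :=
        Finset.single_le_sum (fun j' _ => h0 i j') (Finset.mem_univ j)
    _ = 1 / N := hr i

lemma entropy_mono_of_opt {N : ℕ} (C : Matrix (Fin N) (Fin N) ℝ) {ε : ℝ} (hε : 0 < ε)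
    {P Q : Matrix (Fin N) (Fin N) ℝ} (hP : P ∈ transportPolytope N)
    (hQ : Q ∈ transportPolytope N)
    (hPmin : IsMinOn (fun R => ∑ i, ∑ j, C i j * R i j - ε * matrixEntropy R)
      (transportPolytope N) P)
    (hQmin : IsMinOn (fun R => ∑ i, ∑ j, C i j * R i j) (transportPolytope N) Q) :
    matrixEntropy Q ≤ matrixEntropy P := by
  have h1 := isMinOn_iff.1 hPmin Q hQ
  have h2 := isMinOn_iff.1 hQmin P hP
  nlinarith

/-- Key subsequence extraction lemma. -/
lemma key_lemma (N : ℕ) (C : Matrix (Fin N) (Fin N) ℝ)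
    (Pe : ℝ → Matrix (Fin N) (Fin N) ℝ)
    (hPe : ∀ ε : ℝ, 0 < ε → Pe ε ∈ transportPolytope N ∧
      IsMinOn (fun Q => ∑ i, ∑ j, C i j * Q i j - ε * matrixEntropy Q)
        (transportPolytope N) (Pe ε))
    (e : ℕ → ℝ) (he0 : ∀ k, 0 < e k) (helim : Tendsto e atTop (𝓝 0)) :
    ∃ φ : ℕ → ℕ, StrictMono φ ∧ ∃ Pstar : Matrix (Fin N) (Fin N) ℝ,
      Tendsto (fun k => Pe (e (φ k))) atTop (𝓝 Pstar) ∧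
      Pstar ∈ transportPolytope N ∧
      IsMinOn (fun Q => ∑ i, ∑ j, C i j * Q i j) (transportPolytope N) Pstar ∧
      (∀ Q ∈ transportPolytope N,
        IsMinOn (fun Q => ∑ i, ∑ j, C i j * Q i j) (transportPolytope N) Q →
        matrixEntropy Q ≤ matrixEntropy Pstar) := by
  obtain ⟨Pstar, hPstar, φ, hφ, hconv⟩ :=
    (polytope_isCompact N).tendsto_subseq (x := fun k => Pe (e k))
      (fun k => (hPe (e k) (he0 k)).1)
  refine ⟨φ, hφ, Pstar, hconv, hPstar, ?_, ?_⟩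
  · -- limit of e ∘ φ is 0
    have heφ : Tendsto (fun k => e (φ k)) atTop (𝓝 0) := helim.comp hφ.tendsto_atTop
    have hcostconv : Tendsto (fun k => ∑ i, ∑ j, C i j * Pe (e (φ k)) i j) atTop
        (𝓝 (∑ i, ∑ j, C i j * Pstar i j)) := ((costCont C).tendsto Pstar).comp hconv
    have hentconv : Tendsto (fun k => matrixEntropy (Pe (e (φ k)))) atTop
        (𝓝 (matrixEntropy Pstar)) := (entCont.tendsto Pstar).comp hconv
    have hmul : Tendsto (fun k => e (φ k) * matrixEntropy (Pe (e (φ k)))) atTop (𝓝 0) := by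
      simpa using heφ.mul hentconv
    rw [isMinOn_iff]
    intro Q hQ
    have hA : Tendsto (fun k => ∑ i, ∑ j, C i j * Pe (e (φ k)) i j
        - e (φ k) * matrixEntropy (Pe (e (φ k)))) atTop (𝓝 (∑ i, ∑ j, C i j * Pstar i j)) := by
      simpa using hcostconv.sub hmul
    have hB : Tendsto (fun k => ∑ i, ∑ j, C i j * Q i j
        - e (φ k) * matrixEntropy Q) atTop (𝓝 (∑ i, ∑ j, C i j * Q i j)) := by
      have := (tendsto_const_nhds (x := ∑ i, ∑ j, C i j * Q i j) (f := atTop)).sub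
        (heφ.mul (tendsto_const_nhds (x := matrixEntropy Q)))
      simpa using this
    exact le_of_tendsto_of_tendsto' hA hB fun k =>
      isMinOn_iff.1 (hPe (e (φ k)) (he0 (φ k))).2 Q hQ
  · intro Q hQ hQmin
    have hentconv : Tendsto (fun k => matrixEntropy (Pe (e (φ k)))) atTop
        (𝓝 (matrixEntropy Pstar)) := (entCont.tendsto Pstar).comp hconv
    exact ge_of_tendsto' hentconv fun k =>
      entropy_mono_of_opt C (he0 (φ k)) (hPe (e (φ k)) (he0 (φ k))).1 hQ
        (hPe (e (φ k)) (he0 (φ k))).2 hQmin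

/-- As `ε → 0⁺`, the entropic minimizers `P^ε` converge along a subsequence to a
minimizer of the unregularized linear program; any limit point is the
maximal-entropy optimal plan among unregularized optima; and if the unregularized
problem has a unique solution then the whole family converges to it. -/
theorem entropic_plans_converge (N : ℕ) (hN : 0 < N)
    (C : Matrix (Fin N) (Fin N) ℝ)
    (Pe : ℝ → Matrix (Fin N) (Fin N) ℝ)
    (hPe : ∀ ε : ℝ, 0 < ε → Pe ε ∈ transportPolytope N ∧
      IsMinOn (fun Q => ∑ i, ∑ j, C i j * Q i j - ε * matrixEntropy Q)
        (transportPolytope N) (Pe ε)) :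
    (∀ e : ℕ → ℝ, (∀ k, 0 < e k) → Tendsto e atTop (𝓝 0) →
      ∃ φ : ℕ → ℕ, StrictMono φ ∧ ∃ Pstar : Matrix (Fin N) (Fin N) ℝ,
        Tendsto (fun k => Pe (e (φ k))) atTop (𝓝 Pstar) ∧
        Pstar ∈ transportPolytope N ∧
        IsMinOn (fun Q => ∑ i, ∑ j, C i j * Q i j) (transportPolytope N) Pstar ∧
        (∀ Q ∈ transportPolytope N,
          IsMinOn (fun Q => ∑ i, ∑ j, C i j * Q i j) (transportPolytope N) Q →
          matrixEntropy Q ≤ matrixEntropy Pstar)) ∧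
    (∀ P0 : Matrix (Fin N) (Fin N) ℝ, P0 ∈ transportPolytope N →
      IsMinOn (fun Q => ∑ i, ∑ j, C i j * Q i j) (transportPolytope N) P0 →
      (∀ Q ∈ transportPolytope N,
        IsMinOn (fun Q => ∑ i, ∑ j, C i j * Q i j) (transportPolytope N) Q → Q = P0) →
      Tendsto Pe (𝓝[>] (0:ℝ)) (𝓝 P0)) := by
  constructor
  · exact fun e he0 helim => key_lemma N C Pe hPe e he0 helim
  · intro P0 hP0 hP0min huniq
    rw [tendsto_iff_seq_tendsto]
    intro u hu
    rw [tendsto_nhdsWithin_iff] at hu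
    obtain ⟨hu0, hupos⟩ := hu
    apply tendsto_of_subseq_tendsto
    intro ns hns
    -- eventually u (ns n) > 0; shift to get a fully positive sequence
    have hpos' : ∀ᶠ n in atTop, 0 < u (ns n) := hns.eventually hupos
    obtain ⟨K, hK⟩ := eventually_atTop.1 hpos'
    set e : ℕ → ℝ := fun k => u (ns (k + K)) with he_def
    have he0 : ∀ k, 0 < e k := fun k => hK _ (Nat.le_add_left K k)
    have helim : Tendsto e atTop (𝓝 0) :=
      (hu0.comp hns).comp (tendsto_add_atTop_nat K)
    obtain ⟨φ, hφ, Pstar, hconv, hPstarMem, hPstarMin, _⟩ :=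
      key_lemma N C Pe hPe e he0 helim
    have hps : Pstar = P0 := huniq Pstar hPstarMem hPstarMin
    subst hps
    exact ⟨fun n => φ n + K, hconv⟩
end

section
/- The energy statistic V(a, b) = (2/mn)Σ_{i,j}‖a_i − b_j‖ − (1/m²)Σ_{i,j}‖a_i − a_j‖ − (1/n²)Σ_{i,j}‖b_i − b_j‖ is nonnegative for any finite collections a_1,…,a_m and b_1,…,b_n of points in ℝ^d. -/
open Finset

/-- The two-sample energy statistic. -/
noncomputable def energyStat {d m n : ℕ} (a : Fin m → EuclideanSpace ℝ (Fin d))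
    (b : Fin n → EuclideanSpace ℝ (Fin d)) : ℝ :=
  (2 / ((m : ℝ) * n)) * ∑ i, ∑ j, ‖a i - b j‖
    - (1 / (m : ℝ) ^ 2) * ∑ i, ∑ j, ‖a i - a j‖
    - (1 / (n : ℝ) ^ 2) * ∑ i, ∑ j, ‖b i - b j‖

lemma poly_psd {ι : Type*} [Fintype ι] {d : ℕ} (x : ι → EuclideanSpace ℝ (Fin d))
    (c : ι → ℝ) (k : ℕ) :
    0 ≤ ∑ i, ∑ j, c i * c j * (inner ℝ (x i) (x j) : ℝ) ^ k := by
  have h : ∀ i j : ι, (inner ℝ (x i) (x j) : ℝ) = ∑ t, x i t * x j t := by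
    intro i j
    simp [PiLp.inner_apply, RCLike.inner_apply, mul_comm]
  have key : ∀ i j : ι, c i * c j * (inner ℝ (x i) (x j) : ℝ) ^ k
      = ∑ p : Fin k → Fin d, (c i * ∏ l, x i (p l)) * (c j * ∏ l, x j (p l)) := by
    intro i j
    rw [h, Fintype.sum_pow, Finset.mul_sum]
    refine Finset.sum_congr rfl fun p _ => ?_
    rw [Finset.prod_mul_distrib]; ring
  simp only [key]
  have : ∀ i : ι, ∑ j : ι, ∑ p : Fin k → Fin d, (c i * ∏ l, x i (p l)) * (c j * ∏ l, x j (p l))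
      = ∑ p : Fin k → Fin d, ∑ j : ι, (c i * ∏ l, x i (p l)) * (c j * ∏ l, x j (p l)) :=
    fun i => Finset.sum_comm
  simp only [this]
  rw [Finset.sum_comm]
  refine Finset.sum_nonneg fun p _ => ?_
  have : ∑ i : ι, ∑ j : ι, (c i * ∏ l, x i (p l)) * (c j * ∏ l, x j (p l))
      = (∑ i : ι, c i * ∏ l, x i (p l)) ^ 2 := by
    rw [sq, Finset.sum_mul_sum]
  rw [this]
  exact sq_nonneg _

lemma exp_inner_psd {ι : Type*} [Fintype ι] {d : ℕ} (x : ι → EuclideanSpace ℝ (Fin d))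
    (e : ι → ℝ) {t : ℝ} (ht : 0 ≤ t) :
    0 ≤ ∑ i, ∑ j, e i * e j * Real.exp (t * (inner ℝ (x i) (x j) : ℝ)) := by
  have hsummable : ∀ i j : ι, Summable (fun k : ℕ =>
      e i * e j * ((t * (inner ℝ (x i) (x j) : ℝ)) ^ k / k.factorial)) := by
    intro i j
    exact (Real.summable_pow_div_factorial _).mul_left _
  have hexp : ∀ i j : ι, e i * e j * Real.exp (t * (inner ℝ (x i) (x j) : ℝ))
      = ∑' k : ℕ, e i * e j * ((t * (inner ℝ (x i) (x j) : ℝ)) ^ k / k.factorial) := by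
    intro i j
    rw [Real.exp_eq_exp_ℝ, NormedSpace.exp_eq_tsum_div, tsum_mul_left]
  simp only [hexp]
  have h1 : ∀ i : ι, ∑ j : ι, ∑' k : ℕ, e i * e j * ((t * (inner ℝ (x i) (x j) : ℝ)) ^ k / k.factorial)
      = ∑' k : ℕ, ∑ j : ι, e i * e j * ((t * (inner ℝ (x i) (x j) : ℝ)) ^ k / k.factorial) :=
    fun i => (Summable.tsum_finsetSum fun j _ => hsummable i j).symm
  simp only [h1]
  rw [← Summable.tsum_finsetSum (fun i (_ : i ∈ univ) => summable_sum fun j _ => hsummable i j)]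
  refine tsum_nonneg fun k => ?_
  have heq : ∑ i, ∑ j, e i * e j * ((t * (inner ℝ (x i) (x j) : ℝ)) ^ k / k.factorial)
      = (t ^ k / k.factorial) * ∑ i, ∑ j, e i * e j * (inner ℝ (x i) (x j) : ℝ) ^ k := by
    rw [Finset.mul_sum]
    refine Finset.sum_congr rfl fun i _ => ?_
    rw [Finset.mul_sum]
    refine Finset.sum_congr rfl fun j _ => ?_
    rw [mul_pow]; ring
  rw [heq]
  exact mul_nonneg (div_nonneg (pow_nonneg ht k) (Nat.cast_nonneg _)) (poly_psd x e k)

lemma gauss_psd {ι : Type*} [Fintype ι] {d : ℕ} (x : ι → EuclideanSpace ℝ (Fin d))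
    (c : ι → ℝ) {s : ℝ} (hs : 0 ≤ s) :
    0 ≤ ∑ i, ∑ j, c i * c j * Real.exp (-(s * ‖x i - x j‖ ^ 2)) := by
  have key : ∀ i j : ι, c i * c j * Real.exp (-(s * ‖x i - x j‖ ^ 2))
      = (c i * Real.exp (-(s * ‖x i‖ ^ 2))) * (c j * Real.exp (-(s * ‖x j‖ ^ 2)))
        * Real.exp ((2 * s) * (inner ℝ (x i) (x j) : ℝ)) := by
    intro i j
    rw [norm_sub_sq_real,
      show -(s * (‖x i‖ ^ 2 - 2 * (inner ℝ (x i) (x j) : ℝ) + ‖x j‖ ^ 2))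
        = (-(s * ‖x i‖ ^ 2)) + ((-(s * ‖x j‖ ^ 2)) + (2 * s) * (inner ℝ (x i) (x j) : ℝ)) by ring,
      Real.exp_add, Real.exp_add]
    ring
  simp only [key]
  exact exp_inner_psd x (fun i => c i * Real.exp (-(s * ‖x i‖ ^ 2))) (by linarith)

open MeasureTheory in
lemma Gf_integrable (r : ℝ) :
    IntegrableOn (fun s : ℝ => (1 - Real.exp (-(s * r ^ 2))) * s ^ (-(3:ℝ)/2)) (Set.Ioi 0) := by
  have hmeas : Measurable (fun s : ℝ => (1 - Real.exp (-(s * r ^ 2))) * s ^ (-(3:ℝ)/2)) := by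
    fun_prop
  have hsplit : Set.Ioc (0:ℝ) 1 ∪ Set.Ioi 1 = Set.Ioi 0 := Set.Ioc_union_Ioi_eq_Ioi zero_le_one
  rw [← hsplit]
  apply IntegrableOn.union
  · -- on Set.Ioc 0 1, dominated by r^2 * s^(-1/2)
    have hint : IntegrableOn (fun s : ℝ => r ^ 2 * s ^ (-(1:ℝ)/2)) (Set.Ioc 0 1) := by
      have := (intervalIntegral.intervalIntegrable_rpow' (r := -(1:ℝ)/2) (by norm_num)
        (a := 0) (b := 1))
      rw [intervalIntegrable_iff, Set.uIoc_of_le zero_le_one] at this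
      exact this.const_mul _
    refine Integrable.mono' hint hmeas.aestronglyMeasurable ?_
    refine (ae_restrict_iff' measurableSet_Ioc).mpr (Filter.Eventually.of_forall fun s hs => ?_)
    have hs0 : 0 < s := hs.1
    have hexp1 : 0 ≤ 1 - Real.exp (-(s * r ^ 2)) := by
      have : Real.exp (-(s * r ^ 2)) ≤ 1 := Real.exp_le_one_iff.mpr (neg_nonpos.mpr (by positivity))
      linarith
    have hrp : (0:ℝ) < s ^ (-(3:ℝ)/2) := Real.rpow_pos_of_pos hs0 _
    rw [Real.norm_of_nonneg (by positivity)]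
    have hub : 1 - Real.exp (-(s * r ^ 2)) ≤ s * r ^ 2 := by
      have := Real.add_one_le_exp (-(s * r ^ 2))
      linarith
    calc (1 - Real.exp (-(s * r ^ 2))) * s ^ (-(3:ℝ)/2)
        ≤ (s * r ^ 2) * s ^ (-(3:ℝ)/2) := by
          exact mul_le_mul_of_nonneg_right hub hrp.le
      _ = r ^ 2 * s ^ (-(1:ℝ)/2) := by
          rw [show s * r ^ 2 * s ^ (-(3:ℝ)/2) = r ^ 2 * (s ^ (1:ℝ) * s ^ (-(3:ℝ)/2)) by
            rw [Real.rpow_one]; ring, ← Real.rpow_add hs0]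
          norm_num
  · -- on Set.Ioi 1, dominated by s^(-3/2)
    have hint : IntegrableOn (fun s : ℝ => s ^ (-(3:ℝ)/2)) (Set.Ioi 1) :=
      integrableOn_Ioi_rpow_of_lt (by norm_num) one_pos
    refine Integrable.mono' hint hmeas.aestronglyMeasurable ?_
    refine (ae_restrict_iff' measurableSet_Ioi).mpr (Filter.Eventually.of_forall fun s hs => ?_)
    have hs0 : (0:ℝ) < s := lt_trans one_pos hs
    have hexp1 : 0 ≤ 1 - Real.exp (-(s * r ^ 2)) := by
      have : Real.exp (-(s * r ^ 2)) ≤ 1 := Real.exp_le_one_iff.mpr (neg_nonpos.mpr (by positivity))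
      linarith
    have hrp : (0:ℝ) < s ^ (-(3:ℝ)/2) := Real.rpow_pos_of_pos hs0 _
    rw [Real.norm_of_nonneg (by positivity)]
    nlinarith [Real.exp_pos (-(s * r ^ 2))]

open MeasureTheory in
noncomputable def C0 : ℝ := ∫ s in Set.Ioi (0:ℝ), (1 - Real.exp (-s)) * s ^ (-(3:ℝ)/2)

open MeasureTheory in
lemma C0_pos : 0 < C0 := by
  have hint : IntegrableOn (fun s : ℝ => (1 - Real.exp (-s)) * s ^ (-(3:ℝ)/2)) (Set.Ioi 0) := by
    have := Gf_integrable 1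
    simpa using this
  rw [C0, setIntegral_pos_iff_support_of_nonneg_ae ?_ hint]
  · have hsub : Set.Ioi (0:ℝ) ⊆
        Function.support (fun s : ℝ => (1 - Real.exp (-s)) * s ^ (-(3:ℝ)/2)) ∩ Set.Ioi 0 := by
      intro s hs
      refine ⟨?_, hs⟩
      have hs0 : (0:ℝ) < s := hs
      have h1 : Real.exp (-s) < 1 := Real.exp_lt_one_iff.mpr (by linarith)
      have h2 : (0:ℝ) < s ^ (-(3:ℝ)/2) := Real.rpow_pos_of_pos hs0 _
      simp only [Function.mem_support]
      exact ne_of_gt (by nlinarith)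
    calc (0:ENNReal) < volume (Set.Ioi (0:ℝ)) := by simp
      _ ≤ _ := measure_mono hsub
  · refine (ae_restrict_iff' measurableSet_Ioi).mpr (Filter.Eventually.of_forall fun s hs => ?_)
    have hs0 : (0:ℝ) < s := hs
    have h1 : Real.exp (-s) ≤ 1 := Real.exp_le_one_iff.mpr (by linarith)
    have h2 : (0:ℝ) < s ^ (-(3:ℝ)/2) := Real.rpow_pos_of_pos hs0 _
    exact mul_nonneg (by linarith) h2.le

open MeasureTheory in
lemma integral_Gf {r : ℝ} (hr : 0 ≤ r) :
    ∫ s in Set.Ioi (0:ℝ), (1 - Real.exp (-(s * r ^ 2))) * s ^ (-(3:ℝ)/2) = C0 * r := by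
  rcases eq_or_lt_of_le hr with h | h
  · simp [← h]
  have hr2 : (0:ℝ) < r ^ 2 := by positivity
  have h1 : Set.EqOn (fun s : ℝ => (1 - Real.exp (-(s * r ^ 2))) * s ^ (-(3:ℝ)/2))
      (fun s : ℝ => r ^ 3 * ((1 - Real.exp (-(r ^ 2 * s))) * (r ^ 2 * s) ^ (-(3:ℝ)/2)))
      (Set.Ioi 0) := by
    intro s hs
    have hs0 : (0:ℝ) < s := hs
    have hsplit : (r ^ 2 * s) ^ (-(3:ℝ)/2) = (r ^ 2) ^ (-(3:ℝ)/2) * s ^ (-(3:ℝ)/2) :=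
      Real.mul_rpow (by positivity) hs0.le
    have hpow : (r ^ 2 : ℝ) ^ (-(3:ℝ)/2) = r ^ (-(3:ℝ)) := by
      rw [← Real.rpow_natCast r 2, ← Real.rpow_mul h.le]
      norm_num
    simp only
    rw [hsplit, hpow, mul_comm s (r ^ 2)]
    have : r ^ 3 * r ^ (-(3:ℝ)) = 1 := by
      rw [← Real.rpow_natCast r 3, ← Real.rpow_add h]
      norm_num
    rw [show r ^ 3 * ((1 - Real.exp (-(r ^ 2 * s))) * (r ^ (-(3:ℝ)) * s ^ (-(3:ℝ)/2)))
        = (r ^ 3 * r ^ (-(3:ℝ))) * ((1 - Real.exp (-(r ^ 2 * s))) * s ^ (-(3:ℝ)/2)) from by ring,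
      this, one_mul]
  rw [setIntegral_congr_fun measurableSet_Ioi h1, integral_const_mul,
    integral_comp_mul_left_Ioi (fun u : ℝ => (1 - Real.exp (-u)) * u ^ (-(3:ℝ)/2)) 0 hr2,
    mul_zero]
  rw [show ∫ u in Set.Ioi (0:ℝ), (1 - Real.exp (-u)) * u ^ (-(3:ℝ)/2) = C0 from rfl]
  rw [smul_eq_mul]
  have hr0 : r ≠ 0 := h.ne'
  field_simp

open MeasureTheory in
lemma cnd {ι : Type*} [Fintype ι] {d : ℕ} (x : ι → EuclideanSpace ℝ (Fin d)) (c : ι → ℝ)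
    (hc : ∑ i, c i = 0) : ∑ i, ∑ j, c i * c j * ‖x i - x j‖ ≤ 0 := by
  have hC := C0_pos
  have key : C0 * (∑ i, ∑ j, c i * c j * ‖x i - x j‖) ≤ 0 := by
    have hint : ∀ i j : ι, IntegrableOn
        (fun s : ℝ => c i * c j * ((1 - Real.exp (-(s * ‖x i - x j‖ ^ 2))) * s ^ (-(3:ℝ)/2)))
        (Set.Ioi 0) :=
      fun i j => (Gf_integrable ‖x i - x j‖).const_mul _
    have heq : C0 * (∑ i, ∑ j, c i * c j * ‖x i - x j‖)
        = ∫ s in Set.Ioi (0:ℝ), ∑ i, ∑ j,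
            c i * c j * ((1 - Real.exp (-(s * ‖x i - x j‖ ^ 2))) * s ^ (-(3:ℝ)/2)) := by
      rw [integral_finset_sum _ (fun i _ => integrable_finset_sum _ (fun j _ => hint i j)),
        Finset.mul_sum]
      refine Finset.sum_congr rfl fun i _ => ?_
      rw [integral_finset_sum _ (fun j _ => hint i j), Finset.mul_sum]
      refine Finset.sum_congr rfl fun j _ => ?_
      rw [MeasureTheory.integral_const_mul, integral_Gf (norm_nonneg _)]
      ring
    rw [heq]
    refine setIntegral_nonpos measurableSet_Ioi fun s hs => ?_
    have hs0 : (0:ℝ) < s := hs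
    have hrp : (0:ℝ) < s ^ (-(3:ℝ)/2) := Real.rpow_pos_of_pos hs0 _
    have hsum : ∑ i, ∑ j, c i * c j * ((1 - Real.exp (-(s * ‖x i - x j‖ ^ 2))) * s ^ (-(3:ℝ)/2))
        = s ^ (-(3:ℝ)/2) * ((∑ i, c i) * (∑ j, c j)
            - ∑ i, ∑ j, c i * c j * Real.exp (-(s * ‖x i - x j‖ ^ 2))) := by
      rw [Finset.sum_mul_sum, mul_sub, Finset.mul_sum, Finset.mul_sum, ← Finset.sum_sub_distrib]
      refine Finset.sum_congr rfl fun i _ => ?_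
      rw [Finset.mul_sum, Finset.mul_sum, ← Finset.sum_sub_distrib]
      refine Finset.sum_congr rfl fun j _ => ?_
      ring
    rw [hsum, hc, zero_mul, zero_sub]
    have := gauss_psd x c hs0.le
    nlinarith
  exact le_of_not_gt fun hx => absurd key (not_le.mpr (mul_pos hC hx))

/-- The energy statistic is nonnegative. -/
theorem energyStat_nonneg (d m n : ℕ) (hm : 0 < m) (hn : 0 < n)
    (a : Fin m → EuclideanSpace ℝ (Fin d)) (b : Fin n → EuclideanSpace ℝ (Fin d)) :
    0 ≤ energyStat a b := by
  have hm' : (0:ℝ) < m := Nat.cast_pos.mpr hm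
  have hn' : (0:ℝ) < n := Nat.cast_pos.mpr hn
  set x : Fin m ⊕ Fin n → EuclideanSpace ℝ (Fin d) := Sum.elim a b with hx
  set c : Fin m ⊕ Fin n → ℝ := Sum.elim (fun _ => 1/(m:ℝ)) (fun _ => -(1/(n:ℝ))) with hcdef
  have hc : ∑ i, c i = 0 := by
    rw [Fintype.sum_sum_type]
    simp only [hcdef, Sum.elim_inl, Sum.elim_inr, Finset.sum_const, card_univ, Fintype.card_fin,
      nsmul_eq_mul]
    field_simp
    norm_num
  have h := cnd x c hc
  have hid : ∑ i, ∑ j, c i * c j * ‖x i - x j‖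
      = (1/(m:ℝ)^2) * (∑ i, ∑ j, ‖a i - a j‖) + (1/(n:ℝ)^2) * (∑ i, ∑ j, ‖b i - b j‖)
        - (2/((m:ℝ)*(n:ℝ))) * (∑ i, ∑ j, ‖a i - b j‖) := by
    rw [Fintype.sum_sum_type]
    simp only [Fintype.sum_sum_type, hcdef, hx, Sum.elim_inl, Sum.elim_inr]
    simp_rw [← Finset.mul_sum]
    rw [Finset.sum_add_distrib, Finset.sum_add_distrib]
    simp_rw [← Finset.mul_sum]
    have hswap : ∑ j : Fin n, ∑ i : Fin m, ‖b j - a i‖ = ∑ i : Fin m, ∑ j : Fin n, ‖a i - b j‖ := by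
      rw [Finset.sum_comm]
      exact Finset.sum_congr rfl fun i _ => Finset.sum_congr rfl fun j _ => norm_sub_rev _ _
    rw [hswap]
    field_simp
    ring
  rw [hid] at h
  unfold energyStat
  linarith
end
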